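/- arXiv:1304.6114 — 7 statements merged into one kernel-verified Lean document; each statement's English description precedes it below -/
import Mathlib

section
/- Let A be a real s×m matrix and B an invertible real s×s matrix. Then the s×s matrix C = AAᵀ(B⁻¹)ᵀ + B is invertible. -/
open Matrix

/-- Let `A` be a real `s × m` matrix and `B` an invertible real `s × s`
matrix.  Then the `s × s` matrix `C = A Aᵀ (B⁻¹)ᵀ + B` is invertible too. -/
theorem statement1 (m s : ℕ) (A : Matrix (Fin s) (Fin m) ℝ) (B : Matrix (Fin s) (Fin s) ℝ)
    (hB : IsUnit B) : IsUnit (A * Aᵀ * (B⁻¹)ᵀ + B) := by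
  have hBBt : (B * Bᵀ).PosDef := by
    refine posDef_iff_dotProduct_mulVec.mpr ⟨?_, fun x hx => ?_⟩
    · simpa using isHermitian_mul_conjTranspose_self B
    · have h1 : star x ⬝ᵥ ((B * Bᵀ) *ᵥ x) = (Bᵀ *ᵥ x) ⬝ᵥ (Bᵀ *ᵥ x) := by
        rw [← mulVec_mulVec, dotProduct_mulVec]
        congr 1
        simp [← vecMul_transpose]
      have hne : Bᵀ *ᵥ x ≠ 0 := by
        have hBt : IsUnit Bᵀ := by
          rw [isUnit_iff_isUnit_det, det_transpose, ← isUnit_iff_isUnit_det]; exact hB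
        have : Function.Injective (Bᵀ).mulVec := mulVec_injective_iff_isUnit.mpr hBt
        intro h
        exact hx (this (by simpa using h))
      rw [h1]
      have := dotProduct_self_star_pos_iff (v := Bᵀ *ᵥ x) |>.mpr hne
      simpa using this
  have hD : (A * Aᵀ + B * Bᵀ).PosDef := by
    have h := posSemidef_conjTranspose_mul_self Aᵀ
    exact Matrix.PosDef.posSemidef_add (by simpa using h) hBBt
  have hBinv : IsUnit (B⁻¹)ᵀ := by
    rw [isUnit_iff_isUnit_det, det_transpose, ← isUnit_iff_isUnit_det]
    exact isUnit_nonsing_inv_iff.mpr hB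
  have key : A * Aᵀ * (B⁻¹)ᵀ + B = (A * Aᵀ + B * Bᵀ) * (B⁻¹)ᵀ := by
    have hBt : Bᵀ * (B⁻¹)ᵀ = 1 := by
      rw [← transpose_mul, Matrix.nonsing_inv_mul _ (isUnit_iff_isUnit_det _ |>.mp hB)]
      simp
    rw [add_mul, mul_assoc B, hBt, mul_one]
  rw [key]
  exact hD.isUnit.mul hBinv
end

section
/- Let A be a real s×m matrix, B an invertible real s×s matrix, C = AAᵀ(B⁻¹)ᵀ + B, and W = {(u,v) ∈ ℝᵐ × ℝˢ : Au + Bv = 0}. Then for every σ ∈ ℝˢ, the pair (u,v) = (Aᵀ(B⁻¹)ᵀC⁻¹σ, C⁻¹σ) is the unique element of the orthogonal complement W⊥ of W in ℝᵐ × ℝˢ satisfying the linear equation Au + Bv = σ. -/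
open Matrix

lemma real_conjTranspose_eq {k l : ℕ} (A : Matrix (Fin k) (Fin l) ℝ) : Aᴴ = Aᵀ := by
  ext i j; simp [Matrix.conjTranspose_apply]

lemma posDef_mul_transpose_self {n : ℕ} (B : Matrix (Fin n) (Fin n) ℝ) (hB : IsUnit B) :
    (B * Bᵀ).PosDef := by
  refine Matrix.PosDef.of_dotProduct_mulVec_pos (by rw [← real_conjTranspose_eq]; exact isHermitian_mul_conjTranspose_self B)
    fun x hx => ?_
  have hy : Bᵀ *ᵥ x ≠ 0 := by
    have : Function.Injective (Bᵀ).mulVec :=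
      Matrix.mulVec_injective_iff_isUnit.2 (by
        rwa [Matrix.isUnit_iff_isUnit_det, Matrix.det_transpose, ← Matrix.isUnit_iff_isUnit_det])
    intro h
    exact hx (this (by simpa using h))
  have : star x ⬝ᵥ (B * Bᵀ) *ᵥ x = (Bᵀ *ᵥ x) ⬝ᵥ (Bᵀ *ᵥ x) := by
    rw [star_trivial, ← Matrix.mulVec_mulVec, Matrix.dotProduct_mulVec, Matrix.mulVec_transpose]
  rw [this]
  rcases lt_or_eq_of_le (Finset.sum_nonneg fun i _ => mul_self_nonneg ((Bᵀ *ᵥ x) i)) with h | h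
  · simpa [dotProduct] using h
  · exact absurd (dotProduct_self_eq_zero.mp h.symm) hy

lemma isUnit_C {m s : ℕ} (A : Matrix (Fin s) (Fin m) ℝ) (B : Matrix (Fin s) (Fin s) ℝ)
    (hB : IsUnit B) : IsUnit (A * Aᵀ * (B⁻¹)ᵀ + B) := by
  have hBd : IsUnit B.det := (Matrix.isUnit_iff_isUnit_det B).1 hB
  have hBtd : IsUnit Bᵀ.det := by rwa [Matrix.det_transpose]
  have hfac : A * Aᵀ * (B⁻¹)ᵀ + B = (A * Aᵀ + B * Bᵀ) * (Bᵀ)⁻¹ := by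
    rw [Matrix.add_mul, Matrix.mul_assoc B, Matrix.mul_nonsing_inv _ hBtd,
      Matrix.mul_one, Matrix.transpose_nonsing_inv]
  rw [hfac]
  have hpd : (A * Aᵀ + B * Bᵀ).PosDef := by
    have h1 : (A * Aᵀ).PosSemidef := by
      have := Matrix.posSemidef_self_mul_conjTranspose A
      rwa [real_conjTranspose_eq] at this
    exact Matrix.PosDef.posSemidef_add h1 (posDef_mul_transpose_self B hB)
  exact hpd.isUnit.mul (Matrix.isUnit_nonsing_inv_iff.2 (by
    rwa [Matrix.isUnit_iff_isUnit_det, Matrix.det_transpose, ← Matrix.isUnit_iff_isUnit_det]))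

/-- Let `A` be a real `s × m` matrix, `B` an invertible real `s × s`
matrix, `C = A Aᵀ (B⁻¹)ᵀ + B`, and `W = {(u,v) ∈ ℝᵐ × ℝˢ : Au + Bv = 0}`.  Then for every
`σ ∈ ℝˢ` the pair `(u₀, v₀) = (Aᵀ (B⁻¹)ᵀ C⁻¹ σ, C⁻¹ σ)` is the unique element of the
orthogonal complement `W⊥` of `W` (membership in `W⊥` being expressed as orthogonality,
for the standard Euclidean inner product given by dot products of the components, to
every element of `W`) satisfying the linear equation `Au + Bv = σ`. -/
theorem statement3 (m s : ℕ) (A : Matrix (Fin s) (Fin m) ℝ) (B : Matrix (Fin s) (Fin s) ℝ)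
    (hB : IsUnit B) (C : Matrix (Fin s) (Fin s) ℝ) (hC : C = A * Aᵀ * (B⁻¹)ᵀ + B)
    (σ : Fin s → ℝ)
    (u₀ : Fin m → ℝ) (hu₀ : u₀ = (Aᵀ * (B⁻¹)ᵀ * C⁻¹).mulVec σ)
    (v₀ : Fin s → ℝ) (hv₀ : v₀ = C⁻¹.mulVec σ) :
    (∀ q : (Fin m → ℝ) × (Fin s → ℝ),
        A.mulVec q.1 + B.mulVec q.2 = 0 → u₀ ⬝ᵥ q.1 + v₀ ⬝ᵥ q.2 = 0) ∧
    A.mulVec u₀ + B.mulVec v₀ = σ ∧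
    (∀ u : Fin m → ℝ, ∀ v : Fin s → ℝ,
      (∀ q : (Fin m → ℝ) × (Fin s → ℝ),
          A.mulVec q.1 + B.mulVec q.2 = 0 → u ⬝ᵥ q.1 + v ⬝ᵥ q.2 = 0) →
      A.mulVec u + B.mulVec v = σ → u = u₀ ∧ v = v₀) := by
  have hCu : IsUnit C := hC ▸ isUnit_C A B hB
  have hCd : IsUnit C.det := (Matrix.isUnit_iff_isUnit_det C).1 hCu
  have hBd : IsUnit B.det := (Matrix.isUnit_iff_isUnit_det B).1 hB
  -- w such that u₀ = Aᵀ w, v₀ = Bᵀ w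
  set w : Fin s → ℝ := (B⁻¹)ᵀ *ᵥ (C⁻¹ *ᵥ σ) with hw
  have hu₀' : u₀ = Aᵀ *ᵥ w := by
    simp [hu₀, hw, Matrix.mulVec_mulVec, Matrix.mul_assoc]
  have hv₀' : v₀ = Bᵀ *ᵥ w := by
    rw [hv₀, hw, Matrix.mulVec_mulVec, ← Matrix.transpose_mul,
      Matrix.nonsing_inv_mul _ hBd, Matrix.transpose_one, Matrix.one_mulVec]
  have horth : ∀ q : (Fin m → ℝ) × (Fin s → ℝ),
      A.mulVec q.1 + B.mulVec q.2 = 0 → u₀ ⬝ᵥ q.1 + v₀ ⬝ᵥ q.2 = 0 := by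
    intro q hq
    have h1 : u₀ ⬝ᵥ q.1 = w ⬝ᵥ (A *ᵥ q.1) := by
      rw [hu₀', Matrix.mulVec_transpose, ← Matrix.dotProduct_mulVec]
    have h2 : v₀ ⬝ᵥ q.2 = w ⬝ᵥ (B *ᵥ q.2) := by
      rw [hv₀', Matrix.mulVec_transpose, ← Matrix.dotProduct_mulVec]
    rw [h1, h2, ← dotProduct_add, hq, dotProduct_zero]
  have heq : A.mulVec u₀ + B.mulVec v₀ = σ := by
    have key : A * (Aᵀ * (B⁻¹)ᵀ * C⁻¹) + B * C⁻¹ = C * C⁻¹ := by rw [hC]; simp [Matrix.add_mul, Matrix.mul_assoc, add_comm]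
    rw [hu₀, hv₀, Matrix.mulVec_mulVec, Matrix.mulVec_mulVec, ← Matrix.add_mulVec, key,
      Matrix.mul_nonsing_inv _ hCd, Matrix.one_mulVec]
  refine ⟨horth, heq, fun u v hopq huv => ?_⟩
  have hker : A *ᵥ (u - u₀) + B *ᵥ (v - v₀) = 0 := by
    rw [Matrix.mulVec_sub, Matrix.mulVec_sub]
    have : (A *ᵥ u + B *ᵥ v) - (A *ᵥ u₀ + B *ᵥ v₀) = 0 := by rw [huv, heq, sub_self]
    linear_combination (norm := module) this
  have h1 := hopq (u - u₀, v - v₀) hker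
  have h2 := horth (u - u₀, v - v₀) hker
  have h3 : (u - u₀) ⬝ᵥ (u - u₀) + (v - v₀) ⬝ᵥ (v - v₀) = 0 := by
    have := sub_eq_zero.2 (h1.trans h2.symm)
    simp only [sub_dotProduct] at *
    linarith [h1, h2, sub_dotProduct u u₀ (u - u₀), sub_dotProduct v v₀ (v - v₀)]
  have hnn1 : 0 ≤ (u - u₀) ⬝ᵥ (u - u₀) :=
    Finset.sum_nonneg fun i _ => mul_self_nonneg _
  have hnn2 : 0 ≤ (v - v₀) ⬝ᵥ (v - v₀) :=
    Finset.sum_nonneg fun i _ => mul_self_nonneg _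
  have hz1 : (u - u₀) ⬝ᵥ (u - u₀) = 0 := by linarith
  have hz2 : (v - v₀) ⬝ᵥ (v - v₀) = 0 := by linarith
  exact ⟨sub_eq_zero.1 (dotProduct_self_eq_zero.1 hz1),
    sub_eq_zero.1 (dotProduct_self_eq_zero.1 hz2)⟩
end

section
/- Let U ⊆ ℝᵏ be open, let G : U → ℝˢ be a C² map, and let ζ : J → U be a C² curve on a nontrivial interval J with G(ζ(t)) = 0 for all t ∈ J. Fix t ∈ J and assume that G'(ζ(t)) : ℝᵏ → ℝˢ is surjective. Then the orthogonal projection of the acceleration ζ̈(t) onto the orthogonal complement (ker G'(ζ(t)))⊥ is the unique vector w ∈ (ker G'(ζ(t)))⊥ satisfying G'(ζ(t)) w = −G''(ζ(t))(ζ̇(t), ζ̇(t)). -/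
private lemma deriv_eq_zero_of_eq_zero {E : Type*} [NormedAddCommGroup E] [NormedSpace ℝ E]
    {J : Set ℝ} (hUD : UniqueDiffOn ℝ J) {f : ℝ → E} {d : E} {u : ℝ}
    (hu : u ∈ J) (hd : HasDerivAt f d u) (h0 : ∀ x ∈ J, f x = 0) : d = 0 := by
  have h1 : HasDerivWithinAt f d J u := hd.hasDerivWithinAt
  have h2 : HasDerivWithinAt f 0 J u :=
    (hasDerivWithinAt_const u J (0 : E)).congr (fun x hx => h0 x hx) (h0 u hu)
  rw [← h1.derivWithin (hUD u hu), h2.derivWithin (hUD u hu)]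

/-- Let `U ⊆ ℝᵏ` be open, `G : U → ℝˢ` a `C²` map with first and second
Fréchet derivatives `DG ξ`, `D2G ξ` at `ξ ∈ U`, and let `ζ : J → U` be a `C²` curve on a
nontrivial interval `J` with `G (ζ t) = 0` on `J`.  Fix `t ∈ J` and assume
`G'(ζ t) : ℝᵏ → ℝˢ` is surjective.  Then the orthogonal projection of the acceleration
`ζ'' t` onto the orthogonal complement `(ker G'(ζ t))⊥` is the unique vector
`w ∈ (ker G'(ζ t))⊥` satisfying `G'(ζ t) w = -G''(ζ t)(ζ' t, ζ' t)`. -/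
theorem statement8 (k s : ℕ) (U : Set (EuclideanSpace ℝ (Fin k))) (hU : IsOpen U)
    (G : EuclideanSpace ℝ (Fin k) → EuclideanSpace ℝ (Fin s)) (hG : ContDiffOn ℝ 2 G U)
    (DG : EuclideanSpace ℝ (Fin k) →
      EuclideanSpace ℝ (Fin k) →L[ℝ] EuclideanSpace ℝ (Fin s))
    (hDG : ∀ ξ ∈ U, HasFDerivAt G (DG ξ) ξ)
    (D2G : EuclideanSpace ℝ (Fin k) →
      EuclideanSpace ℝ (Fin k) →L[ℝ] EuclideanSpace ℝ (Fin k) →L[ℝ] EuclideanSpace ℝ (Fin s))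
    (hD2G : ∀ ξ ∈ U, HasFDerivAt DG (D2G ξ) ξ)
    (J : Set ℝ) (hJ : J.OrdConnected) (hJnt : J.Nontrivial)
    (ζ ζ' ζ'' : ℝ → EuclideanSpace ℝ (Fin k))
    (hζ : ∀ t ∈ J, ζ t ∈ U)
    (hζ' : ∀ t ∈ J, HasDerivAt ζ (ζ' t) t)
    (hζ'' : ∀ t ∈ J, HasDerivAt ζ' (ζ'' t) t)
    (hζ''cont : ContinuousOn ζ'' J)
    (hG0 : ∀ t ∈ J, G (ζ t) = 0)
    (t : ℝ) (ht : t ∈ J) (hsurj : Function.Surjective (DG (ζ t))) :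
    ∀ w : EuclideanSpace ℝ (Fin k),
      (w ∈ (LinearMap.ker (DG (ζ t) : EuclideanSpace ℝ (Fin k) →ₗ[ℝ] EuclideanSpace ℝ (Fin s)))ᗮ ∧ DG (ζ t) w = -(D2G (ζ t) (ζ' t) (ζ' t)))
        ↔ w = (Submodule.orthogonalProjectionOnto (LinearMap.ker (DG (ζ t) : EuclideanSpace ℝ (Fin k) →ₗ[ℝ] EuclideanSpace ℝ (Fin s)))ᗮ (ζ'' t) :
            EuclideanSpace ℝ (Fin k)) := by
  have hconv : Convex ℝ J := convex_iff_ordConnected.mpr hJ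
  have hint : (interior J).Nonempty := by
    obtain ⟨a, ha, b, hb, hab⟩ := hJnt
    rcases hab.lt_or_gt with h | h
    · have hsub : Set.Ioo a b ⊆ interior J :=
        interior_maximal (Set.Ioo_subset_Icc_self.trans (hJ.out ha hb)) isOpen_Ioo
      exact (Set.nonempty_Ioo.mpr h).mono hsub
    · have hsub : Set.Ioo b a ⊆ interior J :=
        interior_maximal (Set.Ioo_subset_Icc_self.trans (hJ.out hb ha)) isOpen_Ioo
      exact (Set.nonempty_Ioo.mpr h).mono hsub
  have hUD : UniqueDiffOn ℝ J := uniqueDiffOn_convex hconv hint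
  have hfirst : ∀ u ∈ J, DG (ζ u) (ζ' u) = 0 := by
    intro u hu
    have hc : HasDerivAt (fun x => G (ζ x)) (DG (ζ u) (ζ' u)) u :=
      (hDG (ζ u) (hζ u hu)).comp_hasDerivAt u (hζ' u hu)
    exact deriv_eq_zero_of_eq_zero hUD hu hc (fun x hx => hG0 x hx)
  have hsecond : D2G (ζ t) (ζ' t) (ζ' t) + DG (ζ t) (ζ'' t) = 0 := by
    have hc : HasDerivAt (fun x => DG (ζ x)) (D2G (ζ t) (ζ' t)) t :=
      (hD2G (ζ t) (hζ t ht)).comp_hasDerivAt t (hζ' t ht)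
    have hf : HasDerivAt (fun x => DG (ζ x) (ζ' x))
        (D2G (ζ t) (ζ' t) (ζ' t) + DG (ζ t) (ζ'' t)) t :=
      hc.clm_apply (hζ'' t ht)
    exact deriv_eq_zero_of_eq_zero hUD ht hf hfirst
  have hval : DG (ζ t) (ζ'' t) = -(D2G (ζ t) (ζ' t) (ζ' t)) := by
    rw [eq_neg_iff_add_eq_zero, add_comm]; exact hsecond
  set K := (LinearMap.ker (DG (ζ t) : EuclideanSpace ℝ (Fin k) →ₗ[ℝ] EuclideanSpace ℝ (Fin s))) with hK
  set p : EuclideanSpace ℝ (Fin k) := (Submodule.orthogonalProjectionOnto Kᗮ (ζ'' t) : EuclideanSpace ℝ (Fin k))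
    with hp
  have hpmem : p ∈ Kᗮ := SetLike.coe_mem _
  have hker : ζ'' t - p ∈ K := by
    have := Submodule.sub_starProjection_mem_orthogonal (K := Kᗮ) (ζ'' t)
    rwa [Submodule.orthogonal_orthogonal] at this
  have hDGp : DG (ζ t) p = -(D2G (ζ t) (ζ' t) (ζ' t)) := by
    have h0 : DG (ζ t) (ζ'' t - p) = 0 := hker
    rw [map_sub, sub_eq_zero] at h0
    rw [← h0, hval]
  intro w
  constructor
  · rintro ⟨hw, hweq⟩
    have hdiff : w - p ∈ K := by
      have : DG (ζ t) (w - p) = 0 := by rw [map_sub, hweq, hDGp, sub_self]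
      exact this
    have hdiff' : w - p ∈ Kᗮ := Submodule.sub_mem _ hw hpmem
    have : w - p = 0 := by
      have h := hdiff' (w - p) hdiff
      rwa [inner_self_eq_zero] at h
    exact sub_eq_zero.mp this
  · rintro rfl
    exact ⟨hpmem, hDGp⟩
end

section
/- Let U ⊆ ℝᵐ × ℝˢ be open and let g : U → ℝˢ be a C^∞ map such that ∂₂g(x,y) is invertible for every (x,y) ∈ U. Let E : ℝ × U × ℝᵐ × ℝˢ → ℝᵐ be continuous, and let x : J → ℝᵐ, y : J → ℝˢ be C² functions on a nontrivial interval J such that (x(t),y(t)) ∈ U, g(x(t),y(t)) = 0, and ẍ(t) = E(t, x(t), y(t), ẋ(t), ẏ(t)) for all t ∈ J. Then for all t ∈ J, ÿ(t) = −[∂₂g(x(t),y(t))]⁻¹ ( ∂₁g(x(t),y(t)) E(t,x(t),y(t),ẋ(t),ẏ(t)) + g''(x(t),y(t))((ẋ(t),ẏ(t)), (ẋ(t),ẏ(t))) ). -/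

lemma aux_zero' {n : ℕ} {J : Set ℝ} (hJ : J.OrdConnected) (hJnt : J.Nontrivial)
    {t : ℝ} (ht : t ∈ J) {f : ℝ → Fin n → ℝ} {f' : Fin n → ℝ}
    (hf : HasDerivAt f f' t) (h0 : ∀ u ∈ J, f u = 0) : f' = 0 := by
  obtain ⟨a, ha, b, hb, hab⟩ := hJnt
  have hex : ∃ u ∈ J, u ≠ t := by
    by_cases h : t = a
    · exact ⟨b, hb, by simp [h, Ne.symm hab]⟩
    · exact ⟨a, ha, fun hh => h hh.symm⟩
  obtain ⟨u, huJ, hut⟩ := hex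
  have hsub : Set.uIcc t u ⊆ J := hJ.uIcc_subset ht huJ
  have hud : UniqueDiffWithinAt ℝ J t := by
    have h1 : UniqueDiffWithinAt ℝ (Set.uIcc t u) t := by
      rw [Set.uIcc]
      exact uniqueDiffOn_Icc (min_lt_max.mpr (Ne.symm hut)) t Set.left_mem_uIcc
    exact h1.mono hsub
  have hd : HasDerivWithinAt f f' J t := hf.hasDerivWithinAt
  have hc : HasDerivWithinAt (fun _ => (0 : Fin n → ℝ)) f' J t :=
    hd.congr (fun v hv => (h0 v hv).symm) (h0 t ht).symm
  calc f' = derivWithin (fun _ => (0 : Fin n → ℝ)) J t := (hc.derivWithin hud).symm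
    _ = 0 := congrFun (derivWithin_const (s := J) (c := (0 : Fin n → ℝ))) t

/-- Let `U ⊆ ℝᵐ × ℝˢ` be open and `g : U → ℝˢ` a `C^∞` map with first
and second Fréchet derivatives `Dg ξ` and `D2g ξ` at `ξ ∈ U`, whose partial derivative
with respect to the second variable `B ξ = (v ↦ Dg ξ (0, v))` is invertible for every
`ξ ∈ U` (so that `∂₁g ξ v₁ = Dg ξ (v₁, 0)` and `∂₂g ξ = B ξ`).  Let
`E : ℝ × U × ℝᵐ × ℝˢ → ℝᵐ` be continuous and let `x : J → ℝᵐ`, `y : J → ℝˢ` be `C²`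
functions on a nontrivial interval `J` such that `(x t, y t) ∈ U`, `g (x t, y t) = 0` and
`ẍ t = E(t, x t, y t, ẋ t, ẏ t)` for all `t ∈ J`.  Then for all `t ∈ J`,
`ÿ t = -[∂₂g(x t, y t)]⁻¹ (∂₁g(x t, y t) E(t, x t, y t, ẋ t, ẏ t)
        + g''(x t, y t)((ẋ t, ẏ t), (ẋ t, ẏ t)))`. -/
theorem statement10 (m s : ℕ) (U : Set ((Fin m → ℝ) × (Fin s → ℝ))) (hU : IsOpen U)
    (g : (Fin m → ℝ) × (Fin s → ℝ) → (Fin s → ℝ)) (hg : ContDiffOn ℝ (⊤ : ℕ∞) g U)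
    (Dg : (Fin m → ℝ) × (Fin s → ℝ) → ((Fin m → ℝ) × (Fin s → ℝ)) →L[ℝ] (Fin s → ℝ))
    (hDg : ∀ ξ ∈ U, HasFDerivAt g (Dg ξ) ξ)
    (D2g : (Fin m → ℝ) × (Fin s → ℝ) →
      ((Fin m → ℝ) × (Fin s → ℝ)) →L[ℝ] ((Fin m → ℝ) × (Fin s → ℝ)) →L[ℝ] (Fin s → ℝ))
    (hD2g : ∀ ξ ∈ U, HasFDerivAt Dg (D2g ξ) ξ)
    (B : (Fin m → ℝ) × (Fin s → ℝ) → (Fin s → ℝ) ≃L[ℝ] (Fin s → ℝ))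
    (hB : ∀ ξ ∈ U, ∀ v : Fin s → ℝ, B ξ v = Dg ξ (0, v))
    (E : ℝ → (Fin m → ℝ) → (Fin s → ℝ) → (Fin m → ℝ) → (Fin s → ℝ) → (Fin m → ℝ))
    (hE : Continuous fun q : ℝ × ((Fin m → ℝ) × (Fin s → ℝ)) × (Fin m → ℝ) × (Fin s → ℝ) =>
      E q.1 q.2.1.1 q.2.1.2 q.2.2.1 q.2.2.2)
    (J : Set ℝ) (hJ : J.OrdConnected) (hJnt : J.Nontrivial)
    (x x' x'' : ℝ → Fin m → ℝ) (y y' y'' : ℝ → Fin s → ℝ)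
    (hmem : ∀ t ∈ J, (x t, y t) ∈ U)
    (hx' : ∀ t ∈ J, HasDerivAt x (x' t) t)
    (hx'' : ∀ t ∈ J, HasDerivAt x' (x'' t) t)
    (hy' : ∀ t ∈ J, HasDerivAt y (y' t) t)
    (hy'' : ∀ t ∈ J, HasDerivAt y' (y'' t) t)
    (hx''cont : ContinuousOn x'' J) (hy''cont : ContinuousOn y'' J)
    (hg0 : ∀ t ∈ J, g (x t, y t) = 0)
    (hDAE : ∀ t ∈ J, x'' t = E t (x t) (y t) (x' t) (y' t)) :
    ∀ t ∈ J, y'' t = -(B (x t, y t)).symm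
      (Dg (x t, y t) (E t (x t) (y t) (x' t) (y' t), 0)
        + D2g (x t, y t) (x' t, y' t) (x' t, y' t)) := by
  -- first derivative of g ∘ (x,y) vanishes on J
  have stepA : ∀ u ∈ J, Dg (x u, y u) (x' u, y' u) = 0 := by
    intro u hu
    have hγ : HasDerivAt (fun v => (x v, y v)) (x' u, y' u) u :=
      (hx' u hu).prodMk (hy' u hu)
    exact aux_zero' hJ hJnt hu ((hDg _ (hmem u hu)).comp_hasDerivAt u hγ) hg0
  intro t ht
  have hξ := hmem t ht
  have hγ : HasDerivAt (fun v => (x v, y v)) (x' t, y' t) t :=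
    (hx' t ht).prodMk (hy' t ht)
  have hA : HasDerivAt (fun v => Dg (x v, y v)) (D2g (x t, y t) (x' t, y' t)) t :=
    (hD2g _ hξ).comp_hasDerivAt t hγ
  have hv : HasDerivAt (fun v => (x' v, y' v)) (x'' t, y'' t) t :=
    (hx'' t ht).prodMk (hy'' t ht)
  have hF : HasDerivAt (fun v => Dg (x v, y v) (x' v, y' v))
      (D2g (x t, y t) (x' t, y' t) (x' t, y' t) + Dg (x t, y t) (x'' t, y'' t)) t :=
    hA.clm_apply hv
  have hzero := aux_zero' hJ hJnt ht hF stepA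
  have hsplit : Dg (x t, y t) (x'' t, y'' t)
      = Dg (x t, y t) (x'' t, 0) + Dg (x t, y t) (0, y'' t) := by
    rw [← map_add]
    congr 1
    simp [Prod.ext_iff]
  have key : (B (x t, y t)) (y'' t)
      = -(Dg (x t, y t) (x'' t, 0) + D2g (x t, y t) (x' t, y' t) (x' t, y' t)) := by
    rw [hB _ hξ]
    have := hzero
    rw [hsplit] at this
    linear_combination (norm := abel) this
  have h2 := congrArg (B (x t, y t)).symm key
  rw [ContinuousLinearEquiv.symm_apply_apply, map_neg] at h2
  rw [← hDAE t ht]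
  exact h2
end

section
/- Let U ⊆ ℝᵐ × ℝˢ be open, let g : U → ℝˢ be a C^∞ map with ∂₂g(p,q) invertible for every (p,q) ∈ U, set M = g⁻¹(0), and let E : ℝ × U × ℝᵐ × ℝˢ → ℝᵐ be any map with Ẽ defined by Ẽ(t,p,q,u,v) = ( E(t,p,q,u,v), −[∂₂g(p,q)]⁻¹( ∂₁g(p,q) E(t,p,q,u,v) + g''(p,q)((u,v),(u,v)) ) ). Then for every t ∈ ℝ, every ξ = (p,q) ∈ M and every η = (u,v) ∈ ker g'(p,q), the orthogonal projection of Ẽ(t,p,q,u,v) onto the orthogonal complement (ker g'(p,q))⊥ equals the unique vector w ∈ (ker g'(p,q))⊥ satisfying g'(p,q) w = −g''(p,q)((u,v),(u,v)); in particular this projection does not depend on t nor on the value E(t,p,q,u,v). -/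
open Matrix

set_option maxHeartbeats 1000000
set_option synthInstance.maxHeartbeats 400000

lemma innerWithLp_eq (m s : ℕ)
    (x y : WithLp 2 (EuclideanSpace ℝ (Fin m) × EuclideanSpace ℝ (Fin s))) :
    (inner (𝕜 := ℝ) x y) = x.fst ⬝ᵥ y.fst + x.snd ⬝ᵥ y.snd := by
  rw [WithLp.prod_inner_apply]
  congr 1 <;> · rw [PiLp.inner_apply]; simp [dotProduct, mul_comm]


/-- Let `U ⊆ ℝᵐ × ℝˢ` be open, `g : U → ℝˢ` a `C^∞` map with first and
second Fréchet derivatives `Dg ξ`, `D2g ξ`, whose partial derivative in the second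
variable `B ξ = (v ↦ Dg ξ (0, v))` is invertible on `U`; set `M = g⁻¹(0)`.  Let `E` be
any map and `Ẽ(t,p,q,u,v) = (E(t,p,q,u,v),
  -[∂₂g(p,q)]⁻¹(∂₁g(p,q)E(t,p,q,u,v) + g''(p,q)((u,v),(u,v))))`.
Then for every `t`, every `ξ = (p,q) ∈ M` and every `η = (u,v) ∈ ker g'(p,q)`, the
orthogonal projection of `Ẽ(t,p,q,u,v)` onto `(ker g'(p,q))⊥` equals the unique vector
`w ∈ (ker g'(p,q))⊥` with `g'(p,q) w = -g''(p,q)((u,v),(u,v))`.  Here membership of `w`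
in `(ker g'(p,q))⊥` is expressed as orthogonality (for the standard Euclidean inner
product of `ℝᵐ × ℝˢ`, given by dot products of the components) to every element of the
kernel, and `w` being the orthogonal projection of `Ẽ` onto `(ker g'(p,q))⊥` is
expressed by the (equivalent, since the kernel is a finite-dimensional subspace)
condition that `w ∈ (ker g'(p,q))⊥` and `Ẽ - w ∈ ker g'(p,q)`.  The first conjunct below
states the existence and uniqueness of `w`, the second that the orthogonal projection of
`Ẽ` equals this `w`; in particular the projection depends neither on `t` nor on the
value `E(t,p,q,u,v)`. -/
theorem statement12 (m s : ℕ) (U : Set ((Fin m → ℝ) × (Fin s → ℝ))) (hU : IsOpen U)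
    (g : (Fin m → ℝ) × (Fin s → ℝ) → (Fin s → ℝ)) (hg : ContDiffOn ℝ (⊤ : ℕ∞) g U)
    (Dg : (Fin m → ℝ) × (Fin s → ℝ) → ((Fin m → ℝ) × (Fin s → ℝ)) →L[ℝ] (Fin s → ℝ))
    (hDg : ∀ ξ ∈ U, HasFDerivAt g (Dg ξ) ξ)
    (D2g : (Fin m → ℝ) × (Fin s → ℝ) →
      ((Fin m → ℝ) × (Fin s → ℝ)) →L[ℝ] ((Fin m → ℝ) × (Fin s → ℝ)) →L[ℝ] (Fin s → ℝ))
    (hD2g : ∀ ξ ∈ U, HasFDerivAt Dg (D2g ξ) ξ)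
    (B : (Fin m → ℝ) × (Fin s → ℝ) → (Fin s → ℝ) ≃L[ℝ] (Fin s → ℝ))
    (hB : ∀ ξ ∈ U, ∀ v : Fin s → ℝ, B ξ v = Dg ξ (0, v))
    (E : ℝ → (Fin m → ℝ) → (Fin s → ℝ) → (Fin m → ℝ) → (Fin s → ℝ) → (Fin m → ℝ)) :
    ∀ (t : ℝ), ∀ p : Fin m → ℝ, ∀ q : Fin s → ℝ, (p, q) ∈ U → g (p, q) = 0 →
      ∀ (u : Fin m → ℝ) (v : Fin s → ℝ), Dg (p, q) (u, v) = 0 →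
        (∃! w : (Fin m → ℝ) × (Fin s → ℝ),
          (∀ z : (Fin m → ℝ) × (Fin s → ℝ),
              Dg (p, q) z = 0 → w.1 ⬝ᵥ z.1 + w.2 ⬝ᵥ z.2 = 0) ∧
          Dg (p, q) w = -(D2g (p, q) (u, v) (u, v))) ∧
        (∀ w : (Fin m → ℝ) × (Fin s → ℝ),
          (∀ z : (Fin m → ℝ) × (Fin s → ℝ),
              Dg (p, q) z = 0 → w.1 ⬝ᵥ z.1 + w.2 ⬝ᵥ z.2 = 0) →
          Dg (p, q) w = -(D2g (p, q) (u, v) (u, v)) →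
          Dg (p, q) ((E t p q u v,
              -(B (p, q)).symm (Dg (p, q) (E t p q u v, 0) + D2g (p, q) (u, v) (u, v)))
            - w) = 0) := by
  intro t p q hpqU hg0 u v huv
  classical
  -- key computation: Dg (a, -B⁻¹(Dg(a,0)+c)) = -c
  have key : ∀ (a : Fin m → ℝ) (c : Fin s → ℝ),
      Dg (p, q) (a, -(B (p, q)).symm (Dg (p, q) (a, 0) + c)) = -c := by
    intro a c
    have hsplit : ((a, -(B (p, q)).symm (Dg (p, q) (a, 0) + c)) :
        (Fin m → ℝ) × (Fin s → ℝ))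
        = (a, 0) + (0, -(B (p, q)).symm (Dg (p, q) (a, 0) + c)) := by
      simp
    rw [hsplit, map_add, ← hB (p, q) hpqU]
    simp
  constructor
  · -- existence and uniqueness
    set V := WithLp 2 (EuclideanSpace ℝ (Fin m) × EuclideanSpace ℝ (Fin s)) with hV
    let L : V →ₗ[ℝ] (Fin m → ℝ) × (Fin s → ℝ) :=
      { toFun := fun x => (x.fst.ofLp, x.snd.ofLp)
        map_add' := fun _ _ => rfl
        map_smul' := fun _ _ => rfl }
    let ofP : (Fin m → ℝ) × (Fin s → ℝ) → V :=
      fun z => WithLp.toLp 2 (WithLp.toLp 2 z.1, WithLp.toLp 2 z.2)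
    let T : V →ₗ[ℝ] (Fin s → ℝ) := (Dg (p, q)).toLinearMap ∘ₗ L
    let K : Submodule ℝ V := LinearMap.ker T
    have hTdef : ∀ z : (Fin m → ℝ) × (Fin s → ℝ), T (ofP z) = Dg (p, q) z := fun _ => rfl
    -- a preimage of -D2g
    let w₀ : V := ofP ((0 : Fin m → ℝ), -(B (p, q)).symm (D2g (p, q) (u, v) (u, v)))
    have hw₀ : T w₀ = -(D2g (p, q) (u, v) (u, v)) := by
      show Dg (p, q) ((0 : Fin m → ℝ), -(B (p, q)).symm (D2g (p, q) (u, v) (u, v))) = _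
      have := key 0 (D2g (p, q) (u, v) (u, v))
      simpa [Prod.mk_zero_zero] using this
    haveI : FiniteDimensional ℝ V := by infer_instance
    haveI : CompleteSpace K := FiniteDimensional.complete ℝ K
    obtain ⟨k, hk, w, hw, hsum⟩ := K.exists_add_mem_mem_orthogonal w₀
    refine ⟨L w, ⟨?_, ?_⟩, ?_⟩
    · intro z hz
      have hzK : ofP z ∈ K := by
        show T (ofP z) = 0
        rw [hTdef]; exact hz
      have := (Submodule.mem_orthogonal K w).1 hw (ofP z) hzK
      rw [innerWithLp_eq] at this
      rw [dotProduct_comm, dotProduct_comm (L w).2]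
      exact this
    · have : T w = T w₀ - T k := by rw [hsum]; simp
      have this' : Dg (p, q) (L w) = T w₀ - T k := this
      rw [this', hw₀]
      have hk0 : T k = 0 := hk
      rw [hk0, sub_zero]
    · rintro w' ⟨hw'orth, hw'eq⟩
      set w'V : V := ofP w' with hw'V
      have hw'K : w'V ∈ Kᗮ := by
        refine (Submodule.mem_orthogonal K w'V).2 ?_
        intro z hzK
        have hz : Dg (p, q) (L z) = 0 := hzK
        have h1 := hw'orth (L z) hz
        rw [innerWithLp_eq, dotProduct_comm, dotProduct_comm z.snd.ofLp]
        exact h1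
      have hTw : Dg (p, q) (L w) = -(D2g (p, q) (u, v) (u, v)) := by
        have h1 : T w = T w₀ - T k := by rw [hsum]; simp
        have h1' : Dg (p, q) (L w) = T w₀ - T k := h1
        rw [h1', hw₀]
        have hk0 : T k = 0 := hk
        rw [hk0, sub_zero]
      have hdiff : w'V - w ∈ K ⊓ Kᗮ := by
        constructor
        · show T (w'V - w) = 0
          rw [map_sub]
          have e1 : T w'V = Dg (p, q) w' := rfl
          have e2 : T w = Dg (p, q) (L w) := rfl
          rw [e1, e2, hw'eq, hTw, sub_self]
        · exact Kᗮ.sub_mem hw'K hw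
      rw [K.orthogonal_disjoint.eq_bot] at hdiff
      have hz0 : w'V - w = 0 := hdiff
      exact congrArg L (sub_eq_zero.1 hz0)
  · intro w hworth hweq
    rw [map_sub, hweq, key]
    simp
end

section
/- Let U ⊆ ℝᵐ × ℝˢ be open, let g : U → ℝˢ be a C^∞ map with ∂₂g(p,q) invertible for every (p,q) ∈ U, set M = g⁻¹(0), let E : ℝ × U × ℝᵐ × ℝˢ → ℝᵐ be continuous, and define Ẽ(t,p,q,u,v) = ( E(t,p,q,u,v), −[∂₂g(p,q)]⁻¹( ∂₁g(p,q) E(t,p,q,u,v) + g''(p,q)((u,v),(u,v)) ) ). Let x : J → ℝᵐ and y : J → ℝˢ be C² functions on a nontrivial interval J with ξ(t) := (x(t),y(t)) ∈ M for all t ∈ J, and suppose ẍ(t) = E(t, x(t), y(t), ẋ(t), ẏ(t)) for all t ∈ J. Then for all t ∈ J one has P_{ξ(t)}(ξ̈(t)) = P_{ξ(t)}( Ẽ(t, ξ(t), ξ̇(t)) ), where P_{ξ} denotes the orthogonal projection of ℝᵐ × ℝˢ onto ker g'(ξ); that is, ξ is a solution of the second order equation ξ̈_π = P_ξ Ẽ(t,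 ξ, ξ̇) on M. -/
open Matrix

/-- Let `U ⊆ ℝᵐ × ℝˢ` be open, `g : U → ℝˢ` a `C^∞` map with first and
second Fréchet derivatives `Dg ξ`, `D2g ξ`, whose partial derivative in the second
variable `B ξ = (v ↦ Dg ξ (0, v))` is invertible on `U`; set `M = g⁻¹(0)`.  Let `E` be
continuous and `Ẽ(t,p,q,u,v) = (E(t,p,q,u,v),
  -[∂₂g(p,q)]⁻¹(∂₁g(p,q)E(t,p,q,u,v) + g''(p,q)((u,v),(u,v))))`.
Let `ξ = (x, y) : J → M` be a `C²` curve on a nontrivial interval `J` with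
`ẍ t = E(t, x t, y t, ẋ t, ẏ t)` on `J`.  Then for all `t ∈ J` one has
`P_{ξ t}(ξ̈ t) = P_{ξ t}(Ẽ(t, ξ t, ξ̇ t))`, where `P_ξ` is the orthogonal projection of
`ℝᵐ × ℝˢ` onto `ker g'(ξ)`: since `P_ξ a = P_ξ b` holds exactly when `a - b` is
orthogonal to `ker g'(ξ)`, this is expressed below as the orthogonality (for the standard
Euclidean inner product of `ℝᵐ × ℝˢ`, given by dot products of the components) of
`ξ̈ t - Ẽ(t, ξ t, ξ̇ t)` to every element of `ker g'(ξ t)`; that is, `ξ` solves the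
second order equation `ξ̈_π = P_ξ Ẽ(t, ξ, ξ̇)` on `M`. -/
theorem statement13 (m s : ℕ) (U : Set ((Fin m → ℝ) × (Fin s → ℝ))) (hU : IsOpen U)
    (g : (Fin m → ℝ) × (Fin s → ℝ) → (Fin s → ℝ)) (hg : ContDiffOn ℝ (⊤ : ℕ∞) g U)
    (Dg : (Fin m → ℝ) × (Fin s → ℝ) → ((Fin m → ℝ) × (Fin s → ℝ)) →L[ℝ] (Fin s → ℝ))
    (hDg : ∀ ξ ∈ U, HasFDerivAt g (Dg ξ) ξ)
    (D2g : (Fin m → ℝ) × (Fin s → ℝ) →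
      ((Fin m → ℝ) × (Fin s → ℝ)) →L[ℝ] ((Fin m → ℝ) × (Fin s → ℝ)) →L[ℝ] (Fin s → ℝ))
    (hD2g : ∀ ξ ∈ U, HasFDerivAt Dg (D2g ξ) ξ)
    (B : (Fin m → ℝ) × (Fin s → ℝ) → (Fin s → ℝ) ≃L[ℝ] (Fin s → ℝ))
    (hB : ∀ ξ ∈ U, ∀ v : Fin s → ℝ, B ξ v = Dg ξ (0, v))
    (E : ℝ → (Fin m → ℝ) → (Fin s → ℝ) → (Fin m → ℝ) → (Fin s → ℝ) → (Fin m → ℝ))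
    (hE : Continuous fun q : ℝ × ((Fin m → ℝ) × (Fin s → ℝ)) × (Fin m → ℝ) × (Fin s → ℝ) =>
      E q.1 q.2.1.1 q.2.1.2 q.2.2.1 q.2.2.2)
    (J : Set ℝ) (hJ : J.OrdConnected) (hJnt : J.Nontrivial)
    (x x' x'' : ℝ → Fin m → ℝ) (y y' y'' : ℝ → Fin s → ℝ)
    (hmem : ∀ t ∈ J, (x t, y t) ∈ U)
    (hg0 : ∀ t ∈ J, g (x t, y t) = 0)
    (hx' : ∀ t ∈ J, HasDerivAt x (x' t) t)
    (hx'' : ∀ t ∈ J, HasDerivAt x' (x'' t) t)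
    (hy' : ∀ t ∈ J, HasDerivAt y (y' t) t)
    (hy'' : ∀ t ∈ J, HasDerivAt y' (y'' t) t)
    (hx''cont : ContinuousOn x'' J) (hy''cont : ContinuousOn y'' J)
    (hDAE : ∀ t ∈ J, x'' t = E t (x t) (y t) (x' t) (y' t)) :
    ∀ t ∈ J, ∀ z : (Fin m → ℝ) × (Fin s → ℝ), Dg (x t, y t) z = 0 →
      ((x'' t, y'' t)
          - (E t (x t) (y t) (x' t) (y' t),
             -(B (x t, y t)).symm
               (Dg (x t, y t) (E t (x t) (y t) (x' t) (y' t), 0)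
                 + D2g (x t, y t) (x' t, y' t) (x' t, y' t)))).1 ⬝ᵥ z.1
        + ((x'' t, y'' t)
          - (E t (x t) (y t) (x' t) (y' t),
             -(B (x t, y t)).symm
               (Dg (x t, y t) (E t (x t) (y t) (x' t) (y' t), 0)
                 + D2g (x t, y t) (x' t, y' t) (x' t, y' t)))).2 ⬝ᵥ z.2 = 0 := by

  -- Convexity and unique differentiability of `J`
  have hconv : Convex ℝ J := convex_iff_ordConnected.mpr hJ
  have hud : ∀ t ∈ J, UniqueDiffWithinAt ℝ J t := by
    obtain ⟨a, ha, b, hb, hab⟩ := hJnt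
    rcases hab.lt_or_gt with h | h
    · intro t ht
      refine uniqueDiffWithinAt_convex hconv ⟨(a + b) / 2, ?_⟩ (subset_closure ht)
      exact interior_maximal (fun u hu => hJ.out ha hb ⟨le_of_lt hu.1, le_of_lt hu.2⟩)
        isOpen_Ioo (by constructor <;> linarith)
    · intro t ht
      refine uniqueDiffWithinAt_convex hconv ⟨(a + b) / 2, ?_⟩ (subset_closure ht)
      exact interior_maximal (fun u hu => hJ.out hb ha ⟨le_of_lt hu.1, le_of_lt hu.2⟩)
        isOpen_Ioo (by constructor <;> linarith)
  -- First derivative of the constraint: Dg ξ ξ' = 0 on J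
  have hphi0 : ∀ t ∈ J, Dg (x t, y t) (x' t, y' t) = 0 := by
    intro t ht
    have h1 : HasDerivWithinAt (fun u => g (x u, y u)) (Dg (x t, y t) (x' t, y' t)) J t :=
      ((hDg _ (hmem t ht)).comp_hasDerivAt t ((hx' t ht).prodMk (hy' t ht))).hasDerivWithinAt
    have h2 : HasDerivWithinAt (fun u => g (x u, y u)) 0 J t :=
      (hasDerivWithinAt_const t J (0 : Fin s → ℝ)).congr (fun u hu => hg0 u hu) (hg0 t ht)
    have := h1.derivWithin (hud t ht) ▸ h2.derivWithin (hud t ht)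
    rw [← h1.derivWithin (hud t ht), h2.derivWithin (hud t ht)]
  -- Second derivative of the constraint
  have hkey : ∀ t ∈ J,
      D2g (x t, y t) (x' t, y' t) (x' t, y' t) + Dg (x t, y t) (x'' t, y'' t) = 0 := by
    intro t ht
    have hc : HasDerivAt (fun u => Dg (x u, y u)) (D2g (x t, y t) (x' t, y' t)) t :=
      (hD2g _ (hmem t ht)).comp_hasDerivAt t ((hx' t ht).prodMk (hy' t ht))
    have hv : HasDerivAt (fun u => ((x' u, y' u) : (Fin m → ℝ) × (Fin s → ℝ)))
        (x'' t, y'' t) t := (hx'' t ht).prodMk (hy'' t ht)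
    have h1 : HasDerivWithinAt (fun u => Dg (x u, y u) (x' u, y' u))
        (D2g (x t, y t) (x' t, y' t) (x' t, y' t) + Dg (x t, y t) (x'' t, y'' t)) J t :=
      (hc.clm_apply hv).hasDerivWithinAt
    have h2 : HasDerivWithinAt (fun u => Dg (x u, y u) (x' u, y' u)) 0 J t :=
      (hasDerivWithinAt_const t J (0 : Fin s → ℝ)).congr
        (fun u hu => hphi0 u hu) (hphi0 t ht)
    rw [← h1.derivWithin (hud t ht), h2.derivWithin (hud t ht)]
  -- Solve for y''
  intro t ht z hz
  have hsplit : ((x'' t, y'' t) : (Fin m → ℝ) × (Fin s → ℝ))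
      = (x'' t, 0) + (0, y'' t) := by ext <;> simp
  have hBy : B (x t, y t) (y'' t)
      = -(Dg (x t, y t) (E t (x t) (y t) (x' t) (y' t), 0)
          + D2g (x t, y t) (x' t, y' t) (x' t, y' t)) := by
    have h := hkey t ht
    rw [hB _ (hmem t ht), ← hDAE t ht]
    have : Dg (x t, y t) (x'' t, 0) + Dg (x t, y t) (0, y'' t)
        = Dg (x t, y t) (x'' t, y'' t) := by rw [← map_add, ← hsplit]
    rw [eq_comm, neg_eq_iff_add_eq_zero]
    calc Dg (x t, y t) (x'' t, 0) + D2g (x t, y t) (x' t, y' t) (x' t, y' t)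
          + Dg (x t, y t) (0, y'' t)
        = D2g (x t, y t) (x' t, y' t) (x' t, y' t) + Dg (x t, y t) (x'' t, y'' t) := by
          rw [← this]; ring
      _ = 0 := h
  have hy''eq : y'' t = -(B (x t, y t)).symm
      (Dg (x t, y t) (E t (x t) (y t) (x' t) (y' t), 0)
        + D2g (x t, y t) (x' t, y' t) (x' t, y' t)) := by
    have := congrArg (B (x t, y t)).symm hBy
    rw [ContinuousLinearEquiv.symm_apply_apply, map_neg] at this
    exact this
  have h1 : x'' t - E t (x t) (y t) (x' t) (y' t) = 0 := by rw [hDAE t ht]; simp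
  simp only [Prod.fst_sub, Prod.snd_sub, hy''eq, h1]
  simp
end

section
/- Let U ⊆ ℝᵐ × ℝˢ be open, let g : U → ℝˢ be a C^∞ map with ∂₂g(p,q) invertible for every (p,q) ∈ U, set M = g⁻¹(0), let E : ℝ × U × ℝᵐ × ℝˢ → ℝᵐ be continuous, and define Ẽ(t,p,q,u,v) = ( E(t,p,q,u,v), −[∂₂g(p,q)]⁻¹( ∂₁g(p,q) E(t,p,q,u,v) + g''(p,q)((u,v),(u,v)) ) ). Let ξ = (x,y) : J → M be a C² curve on a nontrivial interval J such that P_{ξ(t)}(ξ̈(t)) = P_{ξ(t)}( Ẽ(t, ξ(t), ξ̇(t)) ) for all t ∈ J, where P_ξ denotes the orthogonal projection of ℝᵐ × ℝˢ onto ker g'(ξ). Then ξ̈(t) = Ẽ(t, ξ(t), ξ̇(t)) for all t ∈ J; in particular ẍ(t) = E(t, x(t), y(t), ẋ(t), ẏ(t)) and g(x(t),y(t)) = 0 for all t ∈ J, i.e. (x,y) is a solution of the DAE ẍ = E(t,x,y,ẋ,ẏ), g(x,y) = 0. -/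
open Matrix

/-- Let `U ⊆ ℝᵐ × ℝˢ` be open, `g : U → ℝˢ` a `C^∞` map with first and
second Fréchet derivatives `Dg ξ`, `D2g ξ`, whose partial derivative in the second
variable `B ξ = (v ↦ Dg ξ (0, v))` is invertible on `U`; set `M = g⁻¹(0)`.  Let `E` be
continuous and `Ẽ(t,p,q,u,v) = (E(t,p,q,u,v),
  -[∂₂g(p,q)]⁻¹(∂₁g(p,q)E(t,p,q,u,v) + g''(p,q)((u,v),(u,v))))`.
Let `ξ = (x, y) : J → M` be a `C²` curve on a nontrivial interval `J` such that
`P_{ξ t}(ξ̈ t) = P_{ξ t}(Ẽ(t, ξ t, ξ̇ t))` for all `t ∈ J`, where `P_ξ` is the orthogonal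
projection of `ℝᵐ × ℝˢ` onto `ker g'(ξ)`; since `P_ξ a = P_ξ b` holds exactly when
`a - b` is orthogonal to `ker g'(ξ)`, this hypothesis is expressed below as the
orthogonality (for the standard Euclidean inner product of `ℝᵐ × ℝˢ`, given by dot
products of the components) of `ξ̈ t - Ẽ(t, ξ t, ξ̇ t)` to every element of
`ker g'(ξ t)`.  Then `ξ̈ t = Ẽ(t, ξ t, ξ̇ t)` for all `t ∈ J`; in particular
`ẍ t = E(t, x t, y t, ẋ t, ẏ t)` and `g (x t, y t) = 0` for all `t ∈ J`, i.e. `(x, y)`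
is a solution of the DAE `ẍ = E(t,x,y,ẋ,ẏ), g(x,y) = 0`. -/
theorem statement14 (m s : ℕ) (U : Set ((Fin m → ℝ) × (Fin s → ℝ))) (hU : IsOpen U)
    (g : (Fin m → ℝ) × (Fin s → ℝ) → (Fin s → ℝ)) (hg : ContDiffOn ℝ (⊤ : ℕ∞) g U)
    (Dg : (Fin m → ℝ) × (Fin s → ℝ) → ((Fin m → ℝ) × (Fin s → ℝ)) →L[ℝ] (Fin s → ℝ))
    (hDg : ∀ ξ ∈ U, HasFDerivAt g (Dg ξ) ξ)
    (D2g : (Fin m → ℝ) × (Fin s → ℝ) →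
      ((Fin m → ℝ) × (Fin s → ℝ)) →L[ℝ] ((Fin m → ℝ) × (Fin s → ℝ)) →L[ℝ] (Fin s → ℝ))
    (hD2g : ∀ ξ ∈ U, HasFDerivAt Dg (D2g ξ) ξ)
    (B : (Fin m → ℝ) × (Fin s → ℝ) → (Fin s → ℝ) ≃L[ℝ] (Fin s → ℝ))
    (hB : ∀ ξ ∈ U, ∀ v : Fin s → ℝ, B ξ v = Dg ξ (0, v))
    (E : ℝ → (Fin m → ℝ) → (Fin s → ℝ) → (Fin m → ℝ) → (Fin s → ℝ) → (Fin m → ℝ))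
    (hE : Continuous fun q : ℝ × ((Fin m → ℝ) × (Fin s → ℝ)) × (Fin m → ℝ) × (Fin s → ℝ) =>
      E q.1 q.2.1.1 q.2.1.2 q.2.2.1 q.2.2.2)
    (J : Set ℝ) (hJ : J.OrdConnected) (hJnt : J.Nontrivial)
    (x x' x'' : ℝ → Fin m → ℝ) (y y' y'' : ℝ → Fin s → ℝ)
    (hmem : ∀ t ∈ J, (x t, y t) ∈ U)
    (hg0 : ∀ t ∈ J, g (x t, y t) = 0)
    (hx' : ∀ t ∈ J, HasDerivAt x (x' t) t)
    (hx'' : ∀ t ∈ J, HasDerivAt x' (x'' t) t)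
    (hy' : ∀ t ∈ J, HasDerivAt y (y' t) t)
    (hy'' : ∀ t ∈ J, HasDerivAt y' (y'' t) t)
    (hx''cont : ContinuousOn x'' J) (hy''cont : ContinuousOn y'' J)
    (hproj : ∀ t ∈ J, ∀ z : (Fin m → ℝ) × (Fin s → ℝ), Dg (x t, y t) z = 0 →
      ((x'' t, y'' t)
          - (E t (x t) (y t) (x' t) (y' t),
             -(B (x t, y t)).symm
               (Dg (x t, y t) (E t (x t) (y t) (x' t) (y' t), 0)
                 + D2g (x t, y t) (x' t, y' t) (x' t, y' t)))).1 ⬝ᵥ z.1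
        + ((x'' t, y'' t)
          - (E t (x t) (y t) (x' t) (y' t),
             -(B (x t, y t)).symm
               (Dg (x t, y t) (E t (x t) (y t) (x' t) (y' t), 0)
                 + D2g (x t, y t) (x' t, y' t) (x' t, y' t)))).2 ⬝ᵥ z.2 = 0) :
    ∀ t ∈ J,
      (x'' t, y'' t)
          = (E t (x t) (y t) (x' t) (y' t),
             -(B (x t, y t)).symm
               (Dg (x t, y t) (E t (x t) (y t) (x' t) (y' t), 0)
                 + D2g (x t, y t) (x' t, y' t) (x' t, y' t)))
        ∧ x'' t = E t (x t) (y t) (x' t) (y' t) ∧ g (x t, y t) = 0 := by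

  -- `J` has unique differentiability
  have hconv : Convex ℝ J := hJ.convex
  obtain ⟨a, haJ, b, hbJ, hab⟩ := hJnt
  have hab' : a < b ∨ b < a := hab.lt_or_gt
  have hint : (interior J).Nonempty := by
    rcases hab' with h | h
    · exact ⟨(a + b) / 2, (isOpen_Ioo.subset_interior_iff).2
        (fun z hz => hJ.out haJ hbJ ⟨hz.1.le, hz.2.le⟩) ⟨by linarith, by linarith⟩⟩
    · exact ⟨(a + b) / 2, (isOpen_Ioo.subset_interior_iff).2
        (fun z hz => hJ.out hbJ haJ ⟨hz.1.le, hz.2.le⟩) ⟨by linarith, by linarith⟩⟩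
  have hud : UniqueDiffOn ℝ J := uniqueDiffOn_convex hconv hint
  -- first derivative of the constraint
  have hξ' : ∀ t ∈ J, HasDerivAt (fun τ => (x τ, y τ)) (x' t, y' t) t :=
    fun t ht => (hx' t ht).prodMk (hy' t ht)
  have key1 : ∀ t ∈ J, Dg (x t, y t) (x' t, y' t) = 0 := by
    intro t ht
    have h1 : HasDerivWithinAt (fun τ => g (x τ, y τ)) (Dg (x t, y t) (x' t, y' t)) J t :=
      ((hDg _ (hmem t ht)).comp_hasDerivAt t (hξ' t ht)).hasDerivWithinAt
    have h2 : HasDerivWithinAt (fun τ => g (x τ, y τ)) 0 J t :=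
      (hasDerivWithinAt_const t J (0 : Fin s → ℝ)).congr (fun τ hτ => hg0 τ hτ) (hg0 t ht)
    have := h1.derivWithin (hud t ht)
    rw [h2.derivWithin (hud t ht)] at this
    exact this.symm
  -- second derivative of the constraint
  have key2 : ∀ t ∈ J,
      D2g (x t, y t) (x' t, y' t) (x' t, y' t) + Dg (x t, y t) (x'' t, y'' t) = 0 := by
    intro t ht
    have hc : HasDerivAt (fun τ => Dg (x τ, y τ)) (D2g (x t, y t) (x' t, y' t)) t :=
      (hD2g _ (hmem t ht)).comp_hasDerivAt t (hξ' t ht)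
    have hu : HasDerivAt (fun τ => (x' τ, y' τ)) (x'' t, y'' t) t :=
      (hx'' t ht).prodMk (hy'' t ht)
    have h1 : HasDerivWithinAt (fun τ => Dg (x τ, y τ) (x' τ, y' τ))
        (D2g (x t, y t) (x' t, y' t) (x' t, y' t) + Dg (x t, y t) (x'' t, y'' t)) J t :=
      (hc.clm_apply hu).hasDerivWithinAt
    have h2 : HasDerivWithinAt (fun τ => Dg (x τ, y τ) (x' τ, y' τ)) 0 J t :=
      (hasDerivWithinAt_const t J (0 : Fin s → ℝ)).congr (fun τ hτ => key1 τ hτ) (key1 t ht)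
    have := h1.derivWithin (hud t ht)
    rw [h2.derivWithin (hud t ht)] at this
    exact this.symm
  intro t ht
  set Et := E t (x t) (y t) (x' t) (y' t) with hEt
  set vt := -(B (x t, y t)).symm
      (Dg (x t, y t) (Et, 0) + D2g (x t, y t) (x' t, y' t) (x' t, y' t)) with hvt
  set w : (Fin m → ℝ) × (Fin s → ℝ) := (x'' t, y'' t) - (Et, vt) with hw
  -- `w` lies in the kernel of `Dg`
  have hDgEv : Dg (x t, y t) (Et, vt) = -D2g (x t, y t) (x' t, y' t) (x' t, y' t) := by
    have hsplit : (Et, vt) = ((Et, 0) : (Fin m → ℝ) × (Fin s → ℝ)) + (0, vt) := by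
      simp [Prod.ext_iff]
    have hBv : Dg (x t, y t) (0, vt) = B (x t, y t) vt := (hB _ (hmem t ht) vt).symm
    have hBv2 : B (x t, y t) vt
        = -(Dg (x t, y t) (Et, 0) + D2g (x t, y t) (x' t, y' t) (x' t, y' t)) := by
      rw [hvt, map_neg, (B (x t, y t)).apply_symm_apply]
    rw [hsplit, map_add, hBv, hBv2]
    abel
  have hker : Dg (x t, y t) w = 0 := by
    have h1 : Dg (x t, y t) (x'' t, y'' t)
        = -D2g (x t, y t) (x' t, y' t) (x' t, y' t) := by
      have := key2 t ht
      linear_combination (norm := module) this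
    rw [hw, map_sub, h1, hDgEv, sub_self]
  -- orthogonality to itself gives `w = 0`
  have hdot := hproj t ht w hker
  have h1 : (0:ℝ) ≤ w.1 ⬝ᵥ w.1 :=
    Finset.sum_nonneg fun i _ => mul_self_nonneg (w.1 i)
  have h2 : (0:ℝ) ≤ w.2 ⬝ᵥ w.2 :=
    Finset.sum_nonneg fun i _ => mul_self_nonneg (w.2 i)
  have hww : ((x'' t, y'' t) - (Et, vt)).1 ⬝ᵥ w.1 + ((x'' t, y'' t) - (Et, vt)).2 ⬝ᵥ w.2
      = w.1 ⬝ᵥ w.1 + w.2 ⬝ᵥ w.2 := by rw [hw]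
  rw [hww] at hdot
  have hw1 : w.1 = 0 := dotProduct_self_eq_zero.1 (by linarith)
  have hw2 : w.2 = 0 := dotProduct_self_eq_zero.1 (by linarith)
  have hweq : (x'' t, y'' t) = (Et, vt) := by
    have : w = 0 := Prod.ext hw1 hw2
    have := sub_eq_zero.1 (hw ▸ this)
    exact this
  refine ⟨hweq, ?_, hg0 t ht⟩
  exact congrArg Prod.fst hweq
end
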